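/- With F(w,q) = Σ_{d≥0} q^d ∏_{k=1}^l ∏_{r=1}^{a_k d}(a_k w + r) / ∏_{r=1}^d ((w+r)^n − w^n) and M the operator M F = (1 + (q/w)d/dq)(F/F(0,q)), one has M^n F = F. -/

import Mathlib

open PowerSeries Polynomial

noncomputable section

/-- coefficient of `q^d` in the hypergeometric series
`F(w,q) = Σ_d q^d ∏_k ∏_{r=1}^{a_k d}(a_k w + r) / ∏_{r=1}^d ((w+r)^n − w^n)`. -/
def Fcoeff (n l : ℕ) (a : ℕ → ℕ) (d : ℕ) : RatFunc ℚ :=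
  (∏ k ∈ Finset.range l, ∏ r ∈ Finset.range (a k * d),
      ((a k : RatFunc ℚ) * RatFunc.X + ((r : RatFunc ℚ) + 1))) /
  (∏ r ∈ Finset.range d, ((RatFunc.X + ((r : RatFunc ℚ) + 1)) ^ n - RatFunc.X ^ n))

def Fser (n l : ℕ) (a : ℕ → ℕ) : PowerSeries (RatFunc ℚ) := PowerSeries.mk (Fcoeff n l a)

/-- evaluation at `w = 0`, coefficientwise in `q`: `F(w,q) ↦ F(0,q)`. -/
def ev0 (F : PowerSeries (RatFunc ℚ)) : PowerSeries ℚ :=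
  PowerSeries.mk fun d => RatFunc.eval (RingHom.id ℚ) 0 (PowerSeries.coeff d F)

/-- the operator `M F = {1 + (q/w) d/dq}(F/F(0,q))`: the coefficient of `q^d` in
`F/F(0,q)` gets multiplied by `(w+d)/w`. -/
def Mop (F : PowerSeries (RatFunc ℚ)) : PowerSeries (RatFunc ℚ) :=
  PowerSeries.mk fun d =>
    (RatFunc.X + (d : RatFunc ℚ)) / RatFunc.X *
      PowerSeries.coeff d
        (F * PowerSeries.map (algebraMap ℚ (RatFunc ℚ)) (ev0 F)⁻¹)

/-- `I_p(q) = (M^p F)(0,q)`. -/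
def Ip (n l : ℕ) (a : ℕ → ℕ) (p : ℕ) : PowerSeries ℚ := ev0 (Mop^[p] (Fser n l a))

end

noncomputable section HGaux
open Finset
local notation "K" => RatFunc ℚ


local notation "ww" => (RatFunc.X : RatFunc ℚ)

/-- `q d/dq` on power series. -/
def Dq {R : Type*} [Semiring R] (F : PowerSeries R) : PowerSeries R :=
  PowerSeries.mk fun d => (d : R) * PowerSeries.coeff d F

/-- the operator `w + q d/dq`. -/
def Eop (F : PowerSeries K) : PowerSeries K := PowerSeries.C ww * F + Dq F

@[simp] lemma coeff_Dq {R : Type*} [Semiring R] (d : ℕ) (F : PowerSeries R) :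
    PowerSeries.coeff d (Dq F) = (d : R) * PowerSeries.coeff d F := coeff_mk _ _

@[simp] lemma coeff_Eop (d : ℕ) (F : PowerSeries K) :
    PowerSeries.coeff d (Eop F) = (ww + d) * PowerSeries.coeff d F := by
  simp [Eop, add_mul]

lemma coeff_Eop_iter (i d : ℕ) (F : PowerSeries K) :
    PowerSeries.coeff d (Eop^[i] F) = (ww + d) ^ i * PowerSeries.coeff d F := by
  induction i with
  | zero => simp
  | succ i ih => rw [Function.iterate_succ_apply', coeff_Eop, ih, pow_succ]; ring

lemma coeff_Dq_iter {R : Type*} [CommSemiring R] (i d : ℕ) (F : PowerSeries R) :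
    PowerSeries.coeff d (Dq^[i] F) = (d : R) ^ i * PowerSeries.coeff d F := by
  induction i with
  | zero => simp
  | succ i ih => rw [Function.iterate_succ_apply', coeff_Dq, ih, pow_succ]; ring

lemma constantCoeff_Dq {R : Type*} [Semiring R] (F : PowerSeries R) :
    PowerSeries.constantCoeff (Dq F) = 0 := by
  rw [← PowerSeries.coeff_zero_eq_constantCoeff_apply, coeff_Dq]; simp

lemma Eop_sum {ι : Type*} (s : Finset ι) (f : ι → PowerSeries K) :
    Eop (∑ i ∈ s, f i) = ∑ i ∈ s, Eop (f i) := by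
  ext d; simp [mul_sum]

lemma Eop_nsmul (c : ℕ) (F : PowerSeries K) : Eop (c • F) = c • Eop F := by
  ext d
  simp only [coeff_Eop, map_nsmul]
  exact mul_smul_comm _ _ _

lemma Eop_mul (H G : PowerSeries K) : Eop (H * G) = Dq H * G + H * Eop G := by
  ext d
  rw [coeff_Eop, map_add, PowerSeries.coeff_mul, PowerSeries.coeff_mul, PowerSeries.coeff_mul,
    mul_sum, ← sum_add_distrib]
  refine sum_congr rfl fun x hx => ?_
  rw [Finset.HasAntidiagonal.mem_antidiagonal] at hx
  rw [coeff_Dq, coeff_Eop]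
  have : (ww + (d : K)) = (x.1 : K) + (ww + x.2) := by
    rw [← hx]; push_cast; ring
  rw [this]; ring

lemma Eop_Cmul (x : K) (F : PowerSeries K) :
    Eop (PowerSeries.C x * F) = PowerSeries.C x * Eop F := by
  ext d; simp; ring

lemma Eop_iter_Cmul (i : ℕ) (x : K) (F : PowerSeries K) :
    Eop^[i] (PowerSeries.C x * F) = PowerSeries.C x * Eop^[i] F := by
  induction i with
  | zero => simp
  | succ i ih =>
    rw [Function.iterate_succ_apply', ih, Eop_Cmul, Function.iterate_succ_apply']

/-- mixed Leibniz rule for iterates of `Eop` on a product. -/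
lemma leibniz (i : ℕ) (H G : PowerSeries K) :
    Eop^[i] (H * G) =
      ∑ j ∈ range (i + 1), i.choose j • (Dq^[i - j] H * Eop^[j] G) := by
  induction i with
  | zero => simp
  | succ i IH =>
    calc
      Eop^[i + 1] (H * G) =
          Eop (∑ j ∈ range i.succ, i.choose j • (Dq^[i - j] H * Eop^[j] G)) := by
        rw [Function.iterate_succ_apply', IH]
      _ = (∑ j ∈ range i.succ, i.choose j • (Dq^[i - j + 1] H * Eop^[j] G)) +
          ∑ j ∈ range i.succ, i.choose j • (Dq^[i - j] H * Eop^[j + 1] G) := by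
        simp_rw [Eop_sum, Eop_nsmul, Eop_mul, Function.iterate_succ_apply',
          smul_add, sum_add_distrib]
      _ = (∑ j ∈ range i.succ,
                i.choose j.succ • (Dq^[i - j] H * Eop^[j + 1] G)) +
              1 • (Dq^[i + 1] H * Eop^[0] G) +
            ∑ j ∈ range i.succ, i.choose j • (Dq^[i - j] H * Eop^[j + 1] G) := ?_
      _ = ((∑ j ∈ range i.succ, i.choose j • (Dq^[i - j] H * Eop^[j + 1] G)) +
              ∑ j ∈ range i.succ,
                i.choose j.succ • (Dq^[i - j] H * Eop^[j + 1] G)) +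
            1 • (Dq^[i + 1] H * Eop^[0] G) := by
        rw [add_comm, add_assoc]
      _ = (∑ j ∈ range i.succ,
              (i + 1).choose (j + 1) • (Dq^[i + 1 - (j + 1)] H * Eop^[j + 1] G)) +
            1 • (Dq^[i + 1] H * Eop^[0] G) := by
        simp_rw [Nat.choose_succ_succ, Nat.succ_sub_succ, add_smul, sum_add_distrib]
      _ = ∑ j ∈ range i.succ.succ,
            i.succ.choose j • (Dq^[i.succ - j] H * Eop^[j] G) := by
        rw [sum_range_succ' _ i.succ, Nat.choose_zero_right, tsub_zero]
    congr
    refine (sum_range_succ' _ _).trans (congr_arg₂ (· + ·) ?_ ?_)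
    · rw [sum_range_succ, Nat.choose_succ_self, zero_smul, add_zero]
      refine sum_congr rfl fun j hj => ?_
      rw [mem_range] at hj
      have h1 : i - (j + 1) + 1 = i - j := by omega
      rw [h1]
    · simp



/-- `f` is regular at `w = 0`. -/
def Reg (f : K) : Prop := Polynomial.eval (0 : ℚ) f.denom ≠ 0

/-- value of `f` at `w = 0`. -/
def e0 (f : K) : ℚ := Polynomial.eval (0 : ℚ) f.num / Polynomial.eval (0 : ℚ) f.denom

lemma eval₂_id0 (p : Polynomial ℚ) : p.eval₂ (RingHom.id ℚ) 0 = p.eval 0 := by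
  simpa using Polynomial.eval₂_at_apply (RingHom.id ℚ) 0 (p := p)

lemma e0_eq_eval (f : K) : RatFunc.eval (RingHom.id ℚ) 0 f = e0 f := by
  rw [RatFunc.eval, eval₂_id0, eval₂_id0, e0]

lemma dvd_eval_ne_zero {p q : Polynomial ℚ} (h : p ∣ q) (hq : q.eval 0 ≠ 0) :
    p.eval 0 ≠ 0 := by
  obtain ⟨c, rfl⟩ := h
  simp only [Polynomial.eval_mul] at hq
  exact fun h0 => hq (by rw [h0, zero_mul])

lemma Reg.add {f g : K} (hf : Reg f) (hg : Reg g) : Reg (f + g) := by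
  have h := RatFunc.denom_add_dvd f g
  exact dvd_eval_ne_zero h (by rw [Polynomial.eval_mul]; exact mul_ne_zero hf hg)

lemma Reg.mul {f g : K} (hf : Reg f) (hg : Reg g) : Reg (f * g) := by
  have h := RatFunc.denom_mul_dvd f g
  exact dvd_eval_ne_zero h (by rw [Polynomial.eval_mul]; exact mul_ne_zero hf hg)

lemma e0_add {f g : K} (hf : Reg f) (hg : Reg g) : e0 (f + g) = e0 f + e0 g := by
  rw [← e0_eq_eval, ← e0_eq_eval, ← e0_eq_eval]
  exact RatFunc.eval_add _ _ (by rw [eval₂_id0]; exact hf) (by rw [eval₂_id0]; exact hg)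

lemma e0_mul {f g : K} (hf : Reg f) (hg : Reg g) : e0 (f * g) = e0 f * e0 g := by
  rw [← e0_eq_eval, ← e0_eq_eval, ← e0_eq_eval]
  exact RatFunc.eval_mul _ _ (by rw [eval₂_id0]; exact hf) (by rw [eval₂_id0]; exact hg)

lemma Reg_algebraMap (p : Polynomial ℚ) : Reg (algebraMap (Polynomial ℚ) K p) := by
  unfold Reg; rw [RatFunc.denom_algebraMap]; simp

lemma e0_algebraMap (p : Polynomial ℚ) :
    e0 (algebraMap (Polynomial ℚ) K p) = p.eval 0 := by
  unfold e0; rw [RatFunc.denom_algebraMap, RatFunc.num_algebraMap]; simp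

lemma Reg_const (c : ℚ) : Reg (algebraMap ℚ K c) := by
  have : algebraMap ℚ K c = algebraMap (Polynomial ℚ) K (Polynomial.C c) := by
    rw [IsScalarTower.algebraMap_apply ℚ (Polynomial ℚ) K]; rfl
  rw [this]; exact Reg_algebraMap _

lemma e0_const (c : ℚ) : e0 (algebraMap ℚ K c) = c := by
  have : algebraMap ℚ K c = algebraMap (Polynomial ℚ) K (Polynomial.C c) := by
    rw [IsScalarTower.algebraMap_apply ℚ (Polynomial ℚ) K]; rfl
  rw [this, e0_algebraMap]; simp

lemma Reg_one : Reg (1 : K) := by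
  simpa using Reg_algebraMap 1

lemma e0_one : e0 (1 : K) = 1 := by
  simpa using e0_algebraMap 1

lemma Reg_sum_e0 {ι : Type*} (s : Finset ι) (f : ι → K) (h : ∀ i ∈ s, Reg (f i)) :
    Reg (∑ i ∈ s, f i) ∧ e0 (∑ i ∈ s, f i) = ∑ i ∈ s, e0 (f i) := by
  classical
  induction s using Finset.cons_induction with
  | empty => simpa using ⟨by simpa using Reg_algebraMap 0, by simpa using e0_algebraMap 0⟩
  | cons i s hi ih =>
    rw [Finset.sum_cons, Finset.sum_cons]
    have h1 := h i (Finset.mem_cons_self i s)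
    obtain ⟨r2, e2⟩ := ih fun j hj => h j (Finset.mem_cons_of_mem hj)
    exact ⟨h1.add r2, by rw [e0_add h1 r2, e2]⟩

lemma Reg_ww_add (d : ℕ) : Reg (ww + (d : K)) := by
  have : ww + (d : K) = algebraMap (Polynomial ℚ) K (Polynomial.X + (d : Polynomial ℚ)) := by
    rw [map_add, RatFunc.algebraMap_X]; push_cast; rfl
  rw [this]; exact Reg_algebraMap _

lemma e0_ww_add (d : ℕ) : e0 (ww + (d : K)) = d := by
  have : ww + (d : K) = algebraMap (Polynomial ℚ) K (Polynomial.X + (d : Polynomial ℚ)) := by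
    rw [map_add, RatFunc.algebraMap_X]; push_cast; rfl
  rw [this, e0_algebraMap]; simp

lemma Reg_pow {f : K} (hf : Reg f) (i : ℕ) : Reg (f ^ i) := by
  induction i with
  | zero => simpa using Reg_one
  | succ i ih => rw [pow_succ]; exact ih.mul hf

lemma e0_pow {f : K} (hf : Reg f) (i : ℕ) : e0 (f ^ i) = e0 f ^ i := by
  induction i with
  | zero => simpa using e0_one
  | succ i ih => rw [pow_succ, e0_mul (Reg_pow hf i) hf, ih, pow_succ]

/-- division lemma: if `g` is regular and vanishes at `0` then `(w+d)/w * g` is regular. -/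
lemma Reg_div_step {g : K} (d : ℕ) (hg : Reg g) (h0 : e0 g = 0) :
    Reg ((RatFunc.X + (d : K)) / RatFunc.X * g) := by
  have hnum : (g.num).eval 0 = 0 := by
    rcases div_eq_zero_iff.mp h0 with h | h
    · exact h
    · exact absurd h hg
  have hX : Polynomial.X ∣ g.num := by
    rw [Polynomial.X_dvd_iff, ← Polynomial.coeff_zero_eq_eval_zero] at *
    exact hnum
  obtain ⟨h, hh⟩ := hX
  have hden : g.denom ≠ 0 := g.denom_ne_zero
  have key : (RatFunc.X + (d : K)) / RatFunc.X * g =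
      algebraMap (Polynomial ℚ) K ((Polynomial.X + (d : Polynomial ℚ)) * h) /
        algebraMap (Polynomial ℚ) K g.denom := by
    have hXne : (RatFunc.X : K) ≠ 0 := RatFunc.X_ne_zero
    have hdne : algebraMap (Polynomial ℚ) K g.denom ≠ 0 := RatFunc.algebraMap_ne_zero hden
    have hXK : algebraMap (Polynomial ℚ) K Polynomial.X = RatFunc.X := RatFunc.algebraMap_X
    have hdK : algebraMap (Polynomial ℚ) K ((d : Polynomial ℚ)) = (d : K) := map_natCast _ _
    have hgrep : g = algebraMap (Polynomial ℚ) K (Polynomial.X * h) /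
        algebraMap (Polynomial ℚ) K g.denom := by
      rw [← hh, RatFunc.num_div_denom]
    set D := g.denom with hD
    rw [hgrep, map_mul, map_mul, map_add, hXK, hdK, div_mul_div_comm,
      div_eq_div_iff (mul_ne_zero hXne hdne) hdne]
    ring
  have : ((RatFunc.X + (d : K)) / RatFunc.X * g).denom ∣ g.denom := by
    rw [RatFunc.denom_dvd hden]
    exact ⟨_, key⟩
  exact dvd_eval_ne_zero this hg





section chunk3
variable (n l : ℕ) (a : ℕ → ℕ)

/-- the polynomial `P(t) = ∏_k ∏_{j=1}^{a_k} (a_k t + j)`. -/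
def Pp : Polynomial ℚ :=
  ∏ k ∈ range l, ∏ j ∈ range (a k),
    (Polynomial.C (a k : ℚ) * Polynomial.X + Polynomial.C ((j : ℚ) + 1))

/-- numerator of `Fcoeff` (in `K`). -/
def NumK (d : ℕ) : K :=
  ∏ k ∈ range l, ∏ r ∈ range (a k * d), ((a k : K) * RatFunc.X + ((r : K) + 1))

/-- denominator of `Fcoeff` (in `K`). -/
def DenK (d : ℕ) : K :=
  ∏ r ∈ range d, ((RatFunc.X + ((r : K) + 1)) ^ n - RatFunc.X ^ n)

lemma Fcoeff_eq_div (d : ℕ) : Fcoeff n l a d = NumK l a d / DenK n d := rfl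

lemma DenK_factor_eq (r : ℕ) :
    ((RatFunc.X + ((r : K) + 1)) ^ n - RatFunc.X ^ n) =
      algebraMap (Polynomial ℚ) K
        ((Polynomial.X + (Polynomial.C ((r : ℚ) + 1))) ^ n - Polynomial.X ^ n) := by
  rw [map_sub, map_pow, map_pow, map_add, RatFunc.algebraMap_X,
    show ((r : ℚ) + 1) = (((r + 1 : ℕ)) : ℚ) by push_cast; ring,
    Polynomial.C_eq_natCast, map_natCast]
  push_cast
  ring

lemma DenK_factor_ne (hn : 0 < n) (r : ℕ) :
    ((RatFunc.X + ((r : K) + 1)) ^ n - RatFunc.X ^ n) ≠ 0 := by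
  rw [DenK_factor_eq]
  apply RatFunc.algebraMap_ne_zero
  intro h
  have := congrArg (Polynomial.eval (0 : ℚ)) h
  simp only [Polynomial.eval_sub, Polynomial.eval_pow, Polynomial.eval_add, Polynomial.eval_X,
    Polynomial.eval_C, Polynomial.eval_zero] at this
  rw [zero_add, zero_pow hn.ne'] at this
  exact (pow_ne_zero n (by positivity : ((r : ℚ) + 1) ≠ 0)) (by linarith)

lemma DenK_ne (hn : 0 < n) (d : ℕ) : DenK n d ≠ 0 :=
  Finset.prod_ne_zero_iff.mpr fun r _ => DenK_factor_ne n hn r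

lemma DenK_succ (d : ℕ) :
    DenK n (d + 1) = DenK n d * ((RatFunc.X + ((d : K) + 1)) ^ n - RatFunc.X ^ n) := by
  rw [DenK, prod_range_succ]; rfl

lemma aeval_Pp (x : K) :
    Polynomial.aeval x (Pp l a) =
      ∏ k ∈ range l, ∏ j ∈ range (a k), ((a k : K) * x + ((j : K) + 1)) := by
  rw [Pp, map_prod]
  refine prod_congr rfl fun k _ => ?_
  rw [map_prod]
  refine prod_congr rfl fun j _ => ?_
  rw [map_add, map_mul, Polynomial.aeval_X, Polynomial.aeval_C, Polynomial.aeval_C]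
  rw [show ((a k : ℚ)) = ((a k : ℕ) : ℚ) by push_cast; ring, map_natCast,
    show ((j : ℚ) + 1) = (((j + 1 : ℕ)) : ℚ) by push_cast; ring, map_natCast]
  push_cast
  ring

lemma NumK_succ (d : ℕ) :
    NumK l a (d + 1) = NumK l a d * Polynomial.aeval (RatFunc.X + (d : K)) (Pp l a) := by
  rw [aeval_Pp, NumK, NumK, ← prod_mul_distrib]
  refine prod_congr rfl fun k _ => ?_
  rw [Nat.mul_succ, prod_range_add]
  congr 1
  refine prod_congr rfl fun j _ => ?_
  push_cast
  ring

/-- the hypergeometric recursion. -/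
lemma HGrec (hn : 0 < n) (d : ℕ) :
    ((RatFunc.X + ((d : K) + 1)) ^ n - RatFunc.X ^ n) * Fcoeff n l a (d + 1) =
      Polynomial.aeval (RatFunc.X + (d : K)) (Pp l a) * Fcoeff n l a d := by
  rw [Fcoeff_eq_div, Fcoeff_eq_div, NumK_succ, DenK_succ]
  have h1 := DenK_ne n hn d
  have h2 := DenK_factor_ne n hn d
  field_simp

end chunk3
section chunk4
variable (n l : ℕ) (a : ℕ → ℕ)

local notation "ι" => PowerSeries.map (algebraMap ℚ (RatFunc ℚ))

/-- polynomial numerator. -/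
def NumP (d : ℕ) : Polynomial ℚ :=
  ∏ k ∈ range l, ∏ r ∈ range (a k * d),
    (Polynomial.C (a k : ℚ) * Polynomial.X + Polynomial.C ((r : ℚ) + 1))

/-- polynomial denominator. -/
def DenP (d : ℕ) : Polynomial ℚ :=
  ∏ r ∈ range d, ((Polynomial.X + Polynomial.C ((r : ℚ) + 1)) ^ n - Polynomial.X ^ n)

lemma NumK_eq (d : ℕ) : NumK l a d = algebraMap (Polynomial ℚ) K (NumP l a d) := by
  rw [NumP, NumK, map_prod]
  refine prod_congr rfl fun k _ => ?_
  rw [map_prod]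
  refine prod_congr rfl fun r _ => ?_
  rw [map_add, map_mul, RatFunc.algebraMap_X,
    Polynomial.C_eq_natCast (a k),
    show ((r : ℚ) + 1) = (((r + 1 : ℕ)) : ℚ) by push_cast; ring,
    Polynomial.C_eq_natCast, map_natCast, map_natCast]
  push_cast
  ring

lemma DenK_eq (d : ℕ) : DenK n d = algebraMap (Polynomial ℚ) K (DenP n d) := by
  rw [DenP, DenK, map_prod]
  exact prod_congr rfl fun r _ => DenK_factor_eq n r

lemma DenP_eval0_ne (hn : 0 < n) (d : ℕ) : (DenP n d).eval 0 ≠ 0 := by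
  rw [DenP, Polynomial.eval_prod]
  refine prod_ne_zero_iff.mpr fun r _ => ?_
  simp only [Polynomial.eval_sub, Polynomial.eval_pow, Polynomial.eval_add, Polynomial.eval_X,
    Polynomial.eval_C]
  rw [zero_add, zero_pow hn.ne']
  intro h
  exact (pow_ne_zero n (by positivity : ((r : ℚ) + 1) ≠ 0)) (by linarith)

lemma Reg_quot (p q : Polynomial ℚ) (hq : q.eval 0 ≠ 0) :
    Reg (algebraMap (Polynomial ℚ) K p / algebraMap (Polynomial ℚ) K q) := by
  have hq0 : q ≠ 0 := fun h => hq (by rw [h]; simp)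
  have : (algebraMap (Polynomial ℚ) K p / algebraMap (Polynomial ℚ) K q).denom ∣ q :=
    (RatFunc.denom_dvd hq0).mpr ⟨p, rfl⟩
  exact dvd_eval_ne_zero this hq

lemma Reg_Fc0 (hn : 0 < n) (d : ℕ) : Reg (Fcoeff n l a d) := by
  rw [Fcoeff_eq_div, NumK_eq, DenK_eq]
  exact Reg_quot _ _ (DenP_eval0_ne n hn d)

/-- coefficients of `M^p F`. -/
def Fc (p d : ℕ) : K := PowerSeries.coeff d (Mop^[p] (Fser n l a))

lemma Fc_zero_eq (d : ℕ) : Fc n l a 0 d = Fcoeff n l a d := by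
  rw [Fc, Function.iterate_zero_apply, Fser, coeff_mk]

lemma Fc_zero_zero : Fc n l a 0 0 = 1 := by
  rw [Fc_zero_eq, Fcoeff]
  simp

lemma coeff_Ip (p d : ℕ) :
    PowerSeries.coeff d (Ip n l a p) = e0 (Fc n l a p d) := by
  rw [Ip, ev0, coeff_mk, e0_eq_eval, Fc]

lemma Fc_succ (p d : ℕ) :
    Fc n l a (p + 1) d = (RatFunc.X + (d : K)) / RatFunc.X *
      PowerSeries.coeff d (Mop^[p] (Fser n l a) * ι (Ip n l a p)⁻¹) := by
  rw [Fc, Function.iterate_succ_apply', Mop, coeff_mk]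
  rfl

lemma Fc_reg_one (hn : 0 < n) : ∀ p : ℕ, (∀ d, Reg (Fc n l a p d)) ∧ Fc n l a p 0 = 1 := by
  intro p
  induction p with
  | zero =>
    refine ⟨fun d => ?_, Fc_zero_zero n l a⟩
    rw [Fc_zero_eq]; exact Reg_Fc0 n l a hn d
  | succ p ih =>
    obtain ⟨hreg, hone⟩ := ih
    have hIc : PowerSeries.constantCoeff (Ip n l a p) = 1 := by
      rw [← PowerSeries.coeff_zero_eq_constantCoeff_apply, coeff_Ip, hone, e0_one]
    have hIinv : Ip n l a p * (Ip n l a p)⁻¹ = 1 :=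
      PowerSeries.mul_inv_cancel _ (by rw [hIc]; exact one_ne_zero)
    have hG : ∀ d, Reg (PowerSeries.coeff d (Mop^[p] (Fser n l a) * ι (Ip n l a p)⁻¹)) ∧
        e0 (PowerSeries.coeff d (Mop^[p] (Fser n l a) * ι (Ip n l a p)⁻¹)) =
          PowerSeries.coeff d (1 : PowerSeries ℚ) := by
      intro d
      rw [PowerSeries.coeff_mul]
      simp only [show ∀ e, (PowerSeries.coeff e) (Mop^[p] (Fser n l a)) = Fc n l a p e
        from fun _ => rfl, PowerSeries.coeff_map]
      have hterm : ∀ x ∈ antidiagonal d,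
          Reg (Fc n l a p x.1 *
            algebraMap ℚ K (PowerSeries.coeff x.2 (Ip n l a p)⁻¹)) := by
        intro x _
        exact (hreg x.1).mul (Reg_const _)
      obtain ⟨hR, hE⟩ := Reg_sum_e0 _ _ hterm
      refine ⟨hR, ?_⟩
      rw [hE, ← hIinv, PowerSeries.coeff_mul]
      refine sum_congr rfl fun x _ => ?_
      rw [e0_mul (hreg x.1) (Reg_const _), e0_const, coeff_Ip]
    constructor
    · intro d
      rcases Nat.eq_zero_or_pos d with rfl | hd
      · rw [Fc_succ]
        rw [show ((0 : ℕ) : K) = 0 from Nat.cast_zero, add_zero,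
          div_self (RatFunc.X_ne_zero), one_mul]
        exact (hG 0).1
      · obtain ⟨hR, hE⟩ := hG d
        rw [PowerSeries.coeff_one, if_neg hd.ne'] at hE
        rw [Fc_succ]
        exact Reg_div_step d hR hE
    · rw [Fc_succ, show ((0 : ℕ) : K) = 0 from Nat.cast_zero, add_zero,
        div_self (RatFunc.X_ne_zero), one_mul, PowerSeries.coeff_mul]
      rw [show antidiagonal 0 = {((0 : ℕ), (0 : ℕ))} from rfl]
      rw [sum_singleton, PowerSeries.coeff_map]
      rw [show (PowerSeries.coeff 0) (Mop^[p] (Fser n l a)) = Fc n l a p 0 from rfl, hone]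
      rw [PowerSeries.coeff_zero_eq_constantCoeff_apply, PowerSeries.constantCoeff_inv, hIc]
      simp

lemma constCoeff_Ip (hn : 0 < n) (p : ℕ) :
    PowerSeries.constantCoeff (Ip n l a p) = 1 := by
  rw [← PowerSeries.coeff_zero_eq_constantCoeff_apply, coeff_Ip,
    (Fc_reg_one n l a hn p).2, e0_one]

lemma Ip_mul_inv (hn : 0 < n) (p : ℕ) : Ip n l a p * (Ip n l a p)⁻¹ = 1 :=
  PowerSeries.mul_inv_cancel _ (by rw [constCoeff_Ip n l a hn]; exact one_ne_zero)

end chunk4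

section chunk5
variable (n l : ℕ) (a : ℕ → ℕ)

local notation "ι" => PowerSeries.map (algebraMap ℚ (RatFunc ℚ))

lemma Reg_wwX : Reg (ww : K) := by
  have h := Reg_ww_add 0
  rwa [Nat.cast_zero, add_zero] at h

lemma e0_wwX : e0 (ww : K) = 0 := by
  have h2 := e0_ww_add 0
  rwa [Nat.cast_zero, add_zero, Nat.cast_zero] at h2

/-- the coefficient of the twisted action is regular at `w=0`, with value the
untwisted action on `I_p`. -/
lemma coeffT (hn : 0 < n) (p d : ℕ) (𝔞 : ℕ → PowerSeries ℚ) :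
    Reg (PowerSeries.coeff d (∑ i ∈ range n, ι (𝔞 i) * Eop^[i] (Mop^[p] (Fser n l a)))) ∧
    e0 (PowerSeries.coeff d (∑ i ∈ range n, ι (𝔞 i) * Eop^[i] (Mop^[p] (Fser n l a)))) =
      PowerSeries.coeff d (∑ i ∈ range n, 𝔞 i * Dq^[i] (Ip n l a p)) := by
  rw [map_sum, map_sum]
  have hi : ∀ i : ℕ,
      Reg (PowerSeries.coeff d (ι (𝔞 i) * Eop^[i] (Mop^[p] (Fser n l a)))) ∧
      e0 (PowerSeries.coeff d (ι (𝔞 i) * Eop^[i] (Mop^[p] (Fser n l a)))) =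
        PowerSeries.coeff d (𝔞 i * Dq^[i] (Ip n l a p)) := by
    intro i
    rw [PowerSeries.coeff_mul, PowerSeries.coeff_mul]
    simp only [PowerSeries.coeff_map, coeff_Eop_iter, coeff_Dq_iter,
      show ∀ e, (PowerSeries.coeff e) (Mop^[p] (Fser n l a)) = Fc n l a p e
        from fun _ => rfl]
    have hterm : ∀ x ∈ antidiagonal d,
        Reg (algebraMap ℚ K (PowerSeries.coeff x.1 (𝔞 i)) *
          ((ww + (x.2 : K)) ^ i * Fc n l a p x.2)) := by
      intro x _
      exact (Reg_const _).mul ((Reg_pow (Reg_ww_add x.2) i).mul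
        ((Fc_reg_one n l a hn p).1 x.2))
    obtain ⟨hR, hE⟩ := Reg_sum_e0 _ _ hterm
    refine ⟨hR, ?_⟩
    rw [hE]
    refine sum_congr rfl fun x _ => ?_
    rw [e0_mul (Reg_const _) ((Reg_pow (Reg_ww_add x.2) i).mul
        ((Fc_reg_one n l a hn p).1 x.2)), e0_const,
      e0_mul (Reg_pow (Reg_ww_add x.2) i) ((Fc_reg_one n l a hn p).1 x.2),
      e0_pow (Reg_ww_add x.2), e0_ww_add, coeff_Ip]
  have houter : ∀ i ∈ range n,
      Reg (PowerSeries.coeff d (ι (𝔞 i) * Eop^[i] (Mop^[p] (Fser n l a)))) :=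
    fun i _ => (hi i).1
  obtain ⟨hR, hE⟩ := Reg_sum_e0 _ _ houter
  exact ⟨hR, by rw [hE]; exact sum_congr rfl fun i _ => (hi i).2⟩

/-- bridge: evaluating the eigen-identity at `w = 0`. -/
lemma bridge (hn : 0 < n) (p : ℕ) (hp : p + 1 ≤ n) (𝔞 : ℕ → PowerSeries ℚ)
    (h0 : PowerSeries.constantCoeff (𝔞 0) = if 0 = n - 1 - p then 1 else 0)
    (h3 : Eop (∑ i ∈ range n, ι (𝔞 i) * Eop^[i] (Mop^[p] (Fser n l a))) =
      PowerSeries.C (ww ^ (n - p)) * Fser n l a) :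
    ∑ i ∈ range n, 𝔞 i * Dq^[i] (Ip n l a p) =
      (if 0 = n - 1 - p then 1 else 0 : PowerSeries ℚ) := by
  have hR := fun d => (coeffT n l a hn p d 𝔞).1
  have hE := fun d => (coeffT n l a hn p d 𝔞).2
  ext d
  have hco := congrArg (PowerSeries.coeff d) h3
  rw [coeff_Eop, PowerSeries.coeff_C_mul] at hco
  have hRHSreg : Reg (ww ^ (n - p) * PowerSeries.coeff d (Fser n l a)) := by
    rw [Fser, coeff_mk]
    exact (Reg_pow Reg_wwX (n - p)).mul (Reg_Fc0 n l a hn d)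
  have hRHS0 : e0 (ww ^ (n - p) * PowerSeries.coeff d (Fser n l a)) = 0 := by
    rw [Fser, coeff_mk, e0_mul (Reg_pow Reg_wwX (n - p)) (Reg_Fc0 n l a hn d),
      e0_pow Reg_wwX, e0_wwX, zero_pow (by omega : n - p ≠ 0), zero_mul]
  have hkey : (d : ℚ) * PowerSeries.coeff d
      (∑ i ∈ range n, 𝔞 i * Dq^[i] (Ip n l a p)) = 0 := by
    rw [← hE d, ← e0_ww_add d, ← e0_mul (Reg_ww_add d) (hR d), hco, hRHS0]
  rcases Nat.eq_zero_or_pos d with rfl | hd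
  · -- d = 0 : compute directly
    have hL : PowerSeries.coeff 0 (∑ i ∈ range n, 𝔞 i * Dq^[i] (Ip n l a p)) =
        PowerSeries.constantCoeff (𝔞 0) := by
      rw [map_sum]
      rw [Finset.sum_eq_single_of_mem 0 (mem_range.mpr hn)]
      · rw [PowerSeries.coeff_mul,
          show antidiagonal 0 = {((0 : ℕ), (0 : ℕ))} from rfl, sum_singleton,
          Function.iterate_zero_apply]
        show PowerSeries.coeff 0 (𝔞 0) * PowerSeries.coeff 0 (Ip n l a p) = _
        rw [coeff_Ip, (Fc_reg_one n l a hn p).2, e0_one, mul_one,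
          PowerSeries.coeff_zero_eq_constantCoeff_apply]
      · intro i _ hi0
        rw [PowerSeries.coeff_mul,
          show antidiagonal 0 = {((0 : ℕ), (0 : ℕ))} from rfl, sum_singleton]
        show PowerSeries.coeff 0 (𝔞 i) * PowerSeries.coeff 0 (Dq^[i] (Ip n l a p)) = 0
        rw [coeff_Dq_iter, Nat.cast_zero, zero_pow hi0, zero_mul, mul_zero]
    rw [hL, h0]
    split_ifs with hc <;> simp
  · rw [mul_eq_zero] at hkey
    rcases hkey with h | h
    · exact absurd h (by positivity)
    · rw [h]
      split_ifs with hc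
      · rw [PowerSeries.coeff_one, if_neg hd.ne']
      · simp

end chunk5

section chunk6
variable (n l : ℕ) (a : ℕ → ℕ)

local notation "ι" => PowerSeries.map (algebraMap ℚ (RatFunc ℚ))

/-- `R = P/(t+1)`. -/
def Rp : Polynomial ℚ := Pp l a /ₘ (Polynomial.X + Polynomial.C 1)

lemma Pp_eval_neg_one (hl : 0 < l) (ha : ∀ k < l, 2 ≤ a k) :
    (Pp l a).eval (-1) = 0 := by
  rw [Pp, Polynomial.eval_prod]
  apply Finset.prod_eq_zero (Finset.mem_range.mpr hl)
  rw [Polynomial.eval_prod]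
  have h2 := ha 0 hl
  apply Finset.prod_eq_zero (i := a 0 - 1) (Finset.mem_range.mpr (by omega))
  simp only [Polynomial.eval_add, Polynomial.eval_mul, Polynomial.eval_C, Polynomial.eval_X]
  rw [Nat.cast_sub (by omega : 1 ≤ a 0), Nat.cast_one]
  ring

lemma Pp_fact (hl : 0 < l) (ha : ∀ k < l, 2 ≤ a k) :
    (Polynomial.X + Polynomial.C 1) * Rp l a = Pp l a := by
  have h := Polynomial.modByMonic_add_div (Pp l a) (Polynomial.X + Polynomial.C (1 : ℚ))
  have hmod : Pp l a %ₘ (Polynomial.X + Polynomial.C 1) = 0 := by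
    rw [show (Polynomial.X + Polynomial.C (1 : ℚ)) = Polynomial.X - Polynomial.C (-1) by
        rw [map_neg, sub_neg_eq_add],
      Polynomial.modByMonic_X_sub_C_eq_C_eval, Pp_eval_neg_one l a hl ha, map_zero]
  rw [hmod, zero_add] at h
  exact h

lemma Pp_factor_ne (k j : ℕ) (hk : k < l) (ha : ∀ k < l, 2 ≤ a k) :
    (Polynomial.C ((a k : ℚ)) * Polynomial.X + Polynomial.C ((j : ℚ) + 1)) ≠ 0 := by
  have h2 := ha k hk
  intro h
  have hd := Polynomial.natDegree_linear (b := ((j : ℚ) + 1)) (show ((a k : ℚ)) ≠ 0 by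
    simp only [ne_eq, Nat.cast_eq_zero]; omega)
  rw [h] at hd
  simp at hd

lemma Pp_ne (ha : ∀ k < l, 2 ≤ a k) : Pp l a ≠ 0 := by
  rw [Pp]
  refine Finset.prod_ne_zero_iff.mpr fun k hk => ?_
  exact Finset.prod_ne_zero_iff.mpr fun j _ =>
    Pp_factor_ne l a k j (Finset.mem_range.mp hk) ha

lemma Pp_natDegree (ha : ∀ k < l, 2 ≤ a k)
    (hsum : ∑ k ∈ Finset.range l, a k = n) : (Pp l a).natDegree = n := by
  rw [Pp, Polynomial.natDegree_prod _ _ (fun k hk =>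
    Finset.prod_ne_zero_iff.mpr fun j _ =>
      Pp_factor_ne l a k j (Finset.mem_range.mp hk) ha)]
  rw [← hsum]
  refine Finset.sum_congr rfl fun k hk => ?_
  rw [Polynomial.natDegree_prod _ _ (fun j _ =>
    Pp_factor_ne l a k j (Finset.mem_range.mp hk) ha)]
  rw [Finset.sum_congr rfl fun (j : ℕ) _ => Polynomial.natDegree_linear (b := ((j : ℚ) + 1))
    (show ((a k : ℚ)) ≠ 0 by
      have := ha k (Finset.mem_range.mp hk); simp only [ne_eq, Nat.cast_eq_zero]; omega)]
  simp

lemma Rp_natDegree_lt (hn : 0 < n) (hl : 0 < l) (ha : ∀ k < l, 2 ≤ a k)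
    (hsum : ∑ k ∈ Finset.range l, a k = n) : (Rp l a).natDegree < n := by
  have hfact := Pp_fact l a hl ha
  have hR0 : Rp l a ≠ 0 := by
    intro h
    rw [h, mul_zero] at hfact
    exact Pp_ne l a ha hfact.symm
  have hX1 : (Polynomial.X + Polynomial.C (1 : ℚ)) ≠ 0 := by
    intro h
    have := Polynomial.natDegree_X_add_C (1 : ℚ)
    rw [h] at this
    simp at this
  have := Polynomial.natDegree_mul hX1 hR0
  rw [hfact, Pp_natDegree n l a ha hsum, Polynomial.natDegree_X_add_C] at this
  omega

lemma aeval_Rp_sum (hn : 0 < n) (hl : 0 < l) (ha : ∀ k < l, 2 ≤ a k)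
    (hsum : ∑ k ∈ Finset.range l, a k = n) (x : K) :
    ∑ i ∈ range n, algebraMap ℚ K ((Rp l a).coeff i) * x ^ i =
      Polynomial.aeval x (Rp l a) := by
  rw [Polynomial.aeval_eq_sum_range' (Rp_natDegree_lt n l a hn hl ha hsum)]
  exact Finset.sum_congr rfl fun i _ => (Algebra.smul_def _ _).symm

lemma aeval_Pp_from_Rp (hl : 0 < l) (ha : ∀ k < l, 2 ≤ a k) (x : K) :
    (x + 1) * Polynomial.aeval x (Rp l a) = Polynomial.aeval x (Pp l a) := by
  rw [← Pp_fact l a hl ha, map_mul, map_add, Polynomial.aeval_X, Polynomial.aeval_C, map_one]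

/-- the base-case operator coefficients. -/
def ba (i : ℕ) : PowerSeries ℚ :=
  PowerSeries.C (if i = n - 1 then 1 else 0) +
    PowerSeries.X * PowerSeries.C (-(Rp l a).coeff i)

lemma ba_o1 (hn : 0 < n) (hl : 0 < l) (ha : ∀ k < l, 2 ≤ a k)
    (hsum : ∑ k ∈ Finset.range l, a k = n) :
    ∀ i, n - 1 - 0 < i → ba n l a i = 0 := by
  intro i hi
  rw [ba, if_neg (by omega), Polynomial.coeff_eq_zero_of_natDegree_lt
    (by have := Rp_natDegree_lt n l a hn hl ha hsum; omega)]
  simp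

lemma ba_o2 (i : ℕ) :
    PowerSeries.constantCoeff (ba n l a i) = if i = n - 1 - 0 then 1 else 0 := by
  rw [ba]
  simp

end chunk6

section chunk6b
variable (n l : ℕ) (a : ℕ → ℕ)

local notation "ι" => PowerSeries.map (algebraMap ℚ (RatFunc ℚ))

lemma coeff_ba_mul (i d : ℕ) (G : PowerSeries K) :
    PowerSeries.coeff d (ι (ba n l a i) * G) =
      (if i = n - 1 then (1 : K) else 0) * PowerSeries.coeff d G +
        (if d = 0 then 0 else
          algebraMap ℚ K (-(Rp l a).coeff i) * PowerSeries.coeff (d - 1) G) := by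
  have hι : ι (ba n l a i) = PowerSeries.C (algebraMap ℚ K (if i = n - 1 then 1 else 0)) +
      PowerSeries.X * PowerSeries.C (algebraMap ℚ K (-(Rp l a).coeff i)) := by
    rw [ba]
    simp only [map_add, map_mul, PowerSeries.map_C, PowerSeries.map_X]
  rw [hι, add_mul, map_add, PowerSeries.coeff_C_mul, mul_assoc]
  congr 1
  · congr 1
    split_ifs <;> simp
  · rcases d with _ | e
    · rw [if_pos rfl, PowerSeries.coeff_zero_eq_constantCoeff_apply, map_mul,
        PowerSeries.constantCoeff_X, zero_mul]
    · rw [if_neg (Nat.succ_ne_zero e), PowerSeries.coeff_succ_X_mul,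
        PowerSeries.coeff_C_mul, Nat.succ_sub_one]

lemma base_o3 (hn : 0 < n) (hl : 0 < l) (ha : ∀ k < l, 2 ≤ a k)
    (hsum : ∑ k ∈ Finset.range l, a k = n) :
    Eop (∑ i ∈ range n, ι (ba n l a i) * Eop^[i] (Mop^[0] (Fser n l a))) =
      PowerSeries.C (ww ^ (n - 0)) * Fser n l a := by
  rw [Function.iterate_zero_apply, Nat.sub_zero]
  ext d
  rw [coeff_Eop, PowerSeries.coeff_C_mul, map_sum]
  simp only [coeff_ba_mul, coeff_Eop_iter, Fser, coeff_mk]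
  rw [sum_add_distrib]
  have hfirst : ∀ d' : ℕ,
      (∑ i ∈ range n, (if i = n - 1 then (1 : K) else 0) *
        ((ww + (d' : K)) ^ i * Fcoeff n l a d')) =
      (ww + (d' : K)) ^ (n - 1) * Fcoeff n l a d' := by
    intro d'
    simp only [ite_mul, one_mul, zero_mul]
    rw [Finset.sum_ite_eq' (range n) (n - 1) (fun i => (ww + (d' : K)) ^ i * Fcoeff n l a d'),
      if_pos (mem_range.mpr (by omega))]
  rcases d with _ | e
  · rw [hfirst]
    rw [Finset.sum_congr rfl (fun i (_ : i ∈ range n) => if_pos rfl), sum_const_zero, add_zero]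
    have hpow : ww ^ n = ww * ww ^ (n - 1) := by
      conv_lhs => rw [show n = n - 1 + 1 by omega]
      rw [pow_succ']
    rw [Nat.cast_zero, add_zero, hpow]
    ring
  · rw [hfirst]
    rw [Finset.sum_congr rfl (fun i (_ : i ∈ range n) => if_neg (Nat.succ_ne_zero e)),
      Nat.succ_sub_one]
    have hsum2 : (∑ i ∈ range n, algebraMap ℚ K (-(Rp l a).coeff i) *
        ((ww + (e : K)) ^ i * Fcoeff n l a e)) =
        -(Polynomial.aeval (ww + (e : K)) (Rp l a) * Fcoeff n l a e) := by
      rw [← aeval_Rp_sum n l a hn hl ha hsum (ww + (e : K))]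
      rw [Finset.sum_congr rfl (fun i (_ : i ∈ range n) =>
        show algebraMap ℚ K (-(Rp l a).coeff i) * ((ww + (e : K)) ^ i * Fcoeff n l a e)
          = -(algebraMap ℚ K ((Rp l a).coeff i) * (ww + (e : K)) ^ i * Fcoeff n l a e) by
          rw [map_neg]; ring)]
      rw [Finset.sum_neg_distrib, ← Finset.sum_mul]
    rw [hsum2]
    have hHG := HGrec n l a hn e
    have hPR := aeval_Pp_from_Rp l a hl ha (ww + (e : K))
    have hpow : (ww + (e : K) + 1) ^ n = (ww + (e : K) + 1) ^ (n - 1) * (ww + (e : K) + 1) := by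
      conv_lhs => rw [show n = n - 1 + 1 by omega]
      rw [pow_succ]
    have hcast : ((e + 1 : ℕ) : K) = (e : K) + 1 := by push_cast; ring
    rw [hcast]
    linear_combination hHG - Fcoeff n l a (e + 1) * hpow - Fcoeff n l a e * hPR

end chunk6b

section chunk7
variable (n l : ℕ) (a : ℕ → ℕ)

local notation "ι" => PowerSeries.map (algebraMap ℚ (RatFunc ℚ))

lemma iota_Dq_iter (k : ℕ) (S : PowerSeries ℚ) : Dq^[k] (ι S) = ι (Dq^[k] S) := by
  induction k with
  | zero => simp
  | succ k ih =>
    rw [Function.iterate_succ_apply', Function.iterate_succ_apply', ih]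
    ext m
    rw [coeff_Dq, PowerSeries.coeff_map, PowerSeries.coeff_map, coeff_Dq, map_mul, map_natCast]

lemma Mop_rel (F : PowerSeries K) :
    PowerSeries.C ww * Mop F = Eop (F * ι (ev0 F)⁻¹) := by
  ext d
  rw [PowerSeries.coeff_C_mul, Mop, coeff_mk, coeff_Eop]
  have hX : (RatFunc.X : K) ≠ 0 := RatFunc.X_ne_zero
  field_simp

lemma C_ww_ne : (PowerSeries.C ww) ≠ 0 := by
  intro h
  have := congrArg (PowerSeries.constantCoeff (R := K)) h
  simp only [PowerSeries.constantCoeff_C, map_zero] at this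
  exact RatFunc.X_ne_zero this

lemma step (hn : 0 < n) (p : ℕ) (hp : p + 2 ≤ n) (𝔞 : ℕ → PowerSeries ℚ)
    (h1 : ∀ i, n - 1 - p < i → 𝔞 i = 0)
    (h2 : ∀ i, PowerSeries.constantCoeff (𝔞 i) = if i = n - 1 - p then 1 else 0)
    (h3 : Eop (∑ i ∈ range n, ι (𝔞 i) * Eop^[i] (Mop^[p] (Fser n l a))) =
      PowerSeries.C (ww ^ (n - p)) * Fser n l a) :
    ∃ 𝔟 : ℕ → PowerSeries ℚ,
      (∀ i, n - 1 - (p + 1) < i → 𝔟 i = 0) ∧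
      (∀ i, PowerSeries.constantCoeff (𝔟 i) = if i = n - 1 - (p + 1) then 1 else 0) ∧
      Eop (∑ i ∈ range n, ι (𝔟 i) * Eop^[i] (Mop^[p + 1] (Fser n l a))) =
        PowerSeries.C (ww ^ (n - (p + 1))) * Fser n l a := by
  have hZ : ∑ i ∈ range n, 𝔞 i * Dq^[i] (Ip n l a p) = 0 := by
    have hb := bridge n l a hn p (by omega) 𝔞 (h2 0) h3
    rwa [if_neg (by omega : ¬ (0 : ℕ) = n - 1 - p)] at hb
  refine ⟨fun j => ∑ i ∈ range n, (i.choose (j + 1)) • (𝔞 i * Dq^[i - (j + 1)] (Ip n l a p)),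
    ?_, ?_, ?_⟩
  · intro j hj
    refine Finset.sum_eq_zero fun i _ => ?_
    by_cases hcase : n - 1 - p < i
    · rw [h1 i hcase, zero_mul, smul_zero]
    · rw [Nat.choose_eq_zero_of_lt (by omega), zero_smul]
  · intro j
    rw [map_sum]
    by_cases hjn : j + 1 < n
    · rw [Finset.sum_eq_single_of_mem (j + 1) (mem_range.mpr hjn)]
      · rw [map_nsmul, map_mul, Nat.choose_self, Nat.sub_self, Function.iterate_zero_apply,
          constCoeff_Ip n l a hn, mul_one, one_smul, h2]
        simp only [show (j + 1 = n - 1 - p) ↔ (j = n - 1 - (p + 1)) from by omega]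
      · intro i _ hine
        rcases Nat.lt_or_ge i (j + 1) with hlt | hge
        · rw [Nat.choose_eq_zero_of_lt hlt, zero_smul, map_zero]
        · have hk : i - (j + 1) ≠ 0 := by omega
          rw [map_nsmul, map_mul,
            show PowerSeries.constantCoeff (Dq^[i - (j + 1)] (Ip n l a p)) = 0 by
              rw [← PowerSeries.coeff_zero_eq_constantCoeff_apply, coeff_Dq_iter,
                Nat.cast_zero, zero_pow hk, zero_mul],
            mul_zero, smul_zero]
    · rw [Finset.sum_eq_zero fun i hi => by
        rw [Nat.choose_eq_zero_of_lt (by have := mem_range.mp hi; omega), zero_smul, map_zero]]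
      rw [if_neg (by omega)]
  · -- the eigen-identity for p+1
    have hM : PowerSeries.C ww * Mop^[p + 1] (Fser n l a) =
        Eop (Mop^[p] (Fser n l a) * ι (Ip n l a p)⁻¹) := by
      rw [Function.iterate_succ_apply']
      exact Mop_rel (Mop^[p] (Fser n l a))
    set G := Mop^[p] (Fser n l a) * ι (Ip n l a p)⁻¹ with hG
    have hIG : ι (Ip n l a p) * G = Mop^[p] (Fser n l a) := by
      rw [hG, ← mul_assoc, mul_comm (ι (Ip n l a p)), mul_assoc, ← map_mul,
        Ip_mul_inv n l a hn p, map_one, mul_one]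
    have hc0 : (∑ i ∈ range n, (i.choose 0) • (𝔞 i * Dq^[i - 0] (Ip n l a p))) = 0 := by
      simp only [Nat.choose_zero_right, one_smul, Nat.sub_zero]
      exact hZ
    have hmid : ∀ i ∈ range n,
        (∑ j ∈ range (n + 1), (i.choose j) •
          (ι (Dq^[i - j] (Ip n l a p)) * Eop^[j] G)) = Eop^[i] (ι (Ip n l a p) * G) := by
      intro i hi
      rw [leibniz i (ι (Ip n l a p)) G]
      rw [← Finset.sum_subset (Finset.range_subset_range.mpr
        (by have := mem_range.mp hi; omega : i + 1 ≤ n + 1))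
        (fun j _ hj => by
          rw [Nat.choose_eq_zero_of_lt (by
            have hj2 : ¬ j < i + 1 := fun h => hj (mem_range.mpr h); omega), zero_smul])]
      refine sum_congr rfl fun j _ => ?_
      rw [iota_Dq_iter]
    have key : PowerSeries.C ww *
        (∑ j ∈ range n, ι (∑ i ∈ range n, (i.choose (j + 1)) •
            (𝔞 i * Dq^[i - (j + 1)] (Ip n l a p))) * Eop^[j] (Mop^[p + 1] (Fser n l a)))
        = ∑ i ∈ range n, ι (𝔞 i) * Eop^[i] (Mop^[p] (Fser n l a)) := by
      rw [mul_sum]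
      calc
        ∑ j ∈ range n, PowerSeries.C ww * (ι (∑ i ∈ range n, (i.choose (j + 1)) •
            (𝔞 i * Dq^[i - (j + 1)] (Ip n l a p))) * Eop^[j] (Mop^[p + 1] (Fser n l a)))
            = ∑ j ∈ range n, ι (∑ i ∈ range n, (i.choose (j + 1)) •
              (𝔞 i * Dq^[i - (j + 1)] (Ip n l a p))) * Eop^[j + 1] G := by
          refine sum_congr rfl fun j _ => ?_
          rw [mul_left_comm, ← Eop_iter_Cmul, hM, ← Function.iterate_succ_apply Eop]
        _ = ∑ j ∈ range (n + 1), ι (∑ i ∈ range n, (i.choose j) •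
              (𝔞 i * Dq^[i - j] (Ip n l a p))) * Eop^[j] G := by
          rw [sum_range_succ' (fun j => ι (∑ i ∈ range n, (i.choose j) •
            (𝔞 i * Dq^[i - j] (Ip n l a p))) * Eop^[j] G) n]
          rw [hc0, map_zero, zero_mul, add_zero]
        _ = ∑ j ∈ range (n + 1), ∑ i ∈ range n, (i.choose j) •
              (ι (𝔞 i) * (ι (Dq^[i - j] (Ip n l a p)) * Eop^[j] G)) := by
          refine sum_congr rfl fun j _ => ?_
          rw [map_sum, sum_mul]
          refine sum_congr rfl fun i _ => ?_
          rw [map_nsmul, map_mul, smul_mul_assoc, mul_assoc]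
        _ = ∑ i ∈ range n, ι (𝔞 i) * ∑ j ∈ range (n + 1), (i.choose j) •
              (ι (Dq^[i - j] (Ip n l a p)) * Eop^[j] G) := by
          rw [sum_comm]
          refine sum_congr rfl fun i _ => ?_
          rw [mul_sum]
          exact sum_congr rfl fun j _ => (mul_smul_comm _ _ _).symm
        _ = ∑ i ∈ range n, ι (𝔞 i) * Eop^[i] (Mop^[p] (Fser n l a)) := by
          refine sum_congr rfl fun i hi => ?_
          rw [hmid i hi, hIG]
    have hEkey := congrArg Eop key
    rw [Eop_Cmul, h3] at hEkey
    have hpow : (PowerSeries.C (R := K)) (ww ^ (n - p)) =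
        PowerSeries.C ww * PowerSeries.C (ww ^ (n - (p + 1))) := by
      rw [← map_mul]
      congr 1
      conv_lhs => rw [show n - p = (n - (p + 1)) + 1 by omega]
      rw [pow_succ']
    rw [hpow, mul_assoc] at hEkey
    exact mul_left_cancel₀ C_ww_ne hEkey

end chunk7

section chunk8
variable (n l : ℕ) (a : ℕ → ℕ)

local notation "ι" => PowerSeries.map (algebraMap ℚ (RatFunc ℚ))

lemma main_inv (hn : 0 < n) (hl : 0 < l) (ha : ∀ k < l, 2 ≤ a k)
    (hsum : ∑ k ∈ Finset.range l, a k = n) :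
    ∀ p, p + 1 ≤ n → ∃ 𝔞 : ℕ → PowerSeries ℚ,
      (∀ i, n - 1 - p < i → 𝔞 i = 0) ∧
      (∀ i, PowerSeries.constantCoeff (𝔞 i) = if i = n - 1 - p then 1 else 0) ∧
      Eop (∑ i ∈ range n, ι (𝔞 i) * Eop^[i] (Mop^[p] (Fser n l a))) =
        PowerSeries.C (ww ^ (n - p)) * Fser n l a := by
  intro p
  induction p with
  | zero =>
    exact fun _ => ⟨ba n l a, ba_o1 n l a hn hl ha hsum, ba_o2 n l a,
      base_o3 n l a hn hl ha hsum⟩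
  | succ p ih =>
    intro hp
    obtain ⟨𝔞, o1, o2, o3⟩ := ih (by omega)
    exact step n l a hn p (by omega) 𝔞 o1 o2 o3

lemma final_eq (hl : 0 < l) (ha : ∀ k < l, 2 ≤ a k)
    (hsum : ∑ k ∈ Finset.range l, a k = n) :
    Mop^[n] (Fser n l a) = Fser n l a := by
  have hn : 0 < n := by
    have h1 := Finset.single_le_sum (fun k (_ : k ∈ range l) => Nat.zero_le (a k))
      (mem_range.mpr hl)
    have h2 := ha 0 hl
    omega
  obtain ⟨𝔞, o1, o2, o3⟩ := main_inv n l a hn hl ha hsum (n - 1) (by omega)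
  have hZ := bridge n l a hn (n - 1) (by omega) 𝔞 (o2 0) o3
  rw [if_pos (by omega : (0 : ℕ) = n - 1 - (n - 1))] at hZ
  have hsingle : ∑ i ∈ range n, 𝔞 i * Dq^[i] (Ip n l a (n - 1)) =
      𝔞 0 * Ip n l a (n - 1) := by
    rw [Finset.sum_eq_single_of_mem 0 (mem_range.mpr hn)]
    · rw [Function.iterate_zero_apply]
    · intro i _ hi
      rw [o1 i (by omega), zero_mul]
  have ha0 : 𝔞 0 = (Ip n l a (n - 1))⁻¹ := by
    have hinv := Ip_mul_inv n l a hn (n - 1)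
    calc 𝔞 0 = 𝔞 0 * (Ip n l a (n - 1) * (Ip n l a (n - 1))⁻¹) := by rw [hinv, mul_one]
    _ = (𝔞 0 * Ip n l a (n - 1)) * (Ip n l a (n - 1))⁻¹ := by ring
    _ = (Ip n l a (n - 1))⁻¹ := by rw [← hsingle, hZ, one_mul]
  have hsum3 : ∑ i ∈ range n, ι (𝔞 i) * Eop^[i] (Mop^[n - 1] (Fser n l a)) =
      Mop^[n - 1] (Fser n l a) * ι (Ip n l a (n - 1))⁻¹ := by
    rw [Finset.sum_eq_single_of_mem 0 (mem_range.mpr hn)]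
    · rw [Function.iterate_zero_apply, ha0, mul_comm]
    · intro i _ hi
      rw [o1 i (by omega), map_zero, zero_mul]
  rw [hsum3] at o3
  have hM : PowerSeries.C ww * Mop^[n - 1 + 1] (Fser n l a) =
      Eop (Mop^[n - 1] (Fser n l a) * ι (Ip n l a (n - 1))⁻¹) := by
    rw [Function.iterate_succ_apply']
    exact Mop_rel _
  rw [show n - 1 + 1 = n by omega, o3, show n - (n - 1) = 1 by omega, pow_one] at hM
  exact mul_left_cancel₀ C_ww_ne hM

end chunk8

end HGaux

/-- Lemma `HGper_lmm`. `M^n F = F` for the hypergeometric series `F`. -/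
theorem M_iterate_n_eq_self (n l : ℕ) (a : ℕ → ℕ) (hl : 0 < l)
    (ha : ∀ k < l, 2 ≤ a k) (hsum : ∑ k ∈ Finset.range l, a k = n) :
    Mop^[n] (Fser n l a) = Fser n l a :=
  final_eq n l a hl ha hsum
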